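/- For all integers n ≥ 5, f(n) ≥ 2^{n−1} + 2^{n−2}. -/
import Mathlib

open Finset

/-- `f n` is the number of relatively prime subsets of `{1,2,...,n}`, i.e. the
number of nonempty subsets `A` of `{1,...,n}` with `gcd(A) = 1`. -/
def f (n : ℕ) : ℕ :=
  ((Finset.Icc 1 n).powerset.filter (fun A => A.Nonempty ∧ A.gcd id = 1)).card

lemma card_aux (X T U : Finset ℕ) (hT : T ⊆ X) (hTU : Disjoint T U) :
    (X.powerset.filter (fun S => T ⊆ S ∧ Disjoint U S)).card
      = 2 ^ ((X \ (T ∪ U)).card) := by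
  rw [← Finset.card_powerset]
  apply Finset.card_bij' (fun S _ => S \ T) (fun S' _ => S' ∪ T)
  · intro S hS
    simp only [mem_filter, mem_powerset] at hS
    obtain ⟨hSX, hTS, hUS⟩ := hS
    simp only [mem_powerset]
    intro x hx
    simp only [mem_sdiff, mem_union] at *
    obtain ⟨hxS, hxT⟩ := hx
    exact ⟨hSX hxS, by push_neg; exact ⟨hxT, fun hxU => (Finset.disjoint_left.mp hUS) hxU hxS⟩⟩
  · intro S' hS'
    simp only [mem_powerset] at hS'
    simp only [mem_filter, mem_powerset]
    refine ⟨?_, Finset.subset_union_right, ?_⟩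
    · exact Finset.union_subset (fun x hx => (Finset.mem_sdiff.mp (hS' hx)).1) hT
    · rw [Finset.disjoint_union_right]
      constructor
      · exact Finset.disjoint_left.mpr fun x hxU hxS' => by
          have := Finset.mem_sdiff.mp (hS' hxS')
          simp [Finset.mem_union] at this
          exact this.2.2 hxU
      · exact hTU.symm
  · intro S hS
    simp only [mem_filter, mem_powerset] at hS
    exact Finset.sdiff_union_of_subset hS.2.1
  · intro S' hS'
    simp only [mem_powerset] at hS'
    rw [Finset.union_sdiff_right]
    exact Finset.sdiff_eq_self_of_disjoint (Finset.disjoint_left.mpr fun x hxS' hxT => by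
      have := Finset.mem_sdiff.mp (hS' hxS')
      simp [Finset.mem_union] at this
      exact this.2.1 hxT)

lemma gcd_one_of_pair {S : Finset ℕ} {a b : ℕ} (ha : a ∈ S) (hb : b ∈ S)
    (hab : Nat.gcd a b = 1) : S.gcd id = 1 := by
  have h1 : S.gcd id ∣ a := Finset.gcd_dvd ha
  have h2 : S.gcd id ∣ b := Finset.gcd_dvd hb
  have := Nat.dvd_gcd h1 h2
  rw [hab] at this
  exact Nat.eq_one_of_dvd_one this

set_option maxHeartbeats 1000000 in
theorem f_lower_bound (n : ℕ) (hn : 5 ≤ n) :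
    2 ^ (n - 1) + 2 ^ (n - 2) ≤ f n := by
  classical
  set X := Finset.Icc 1 n with hX
  have hmem : ∀ k, 1 ≤ k → k ≤ n → k ∈ X := fun k h1 h2 => by
    simp [hX, Finset.mem_Icc]; omega
  set P := X.powerset.filter (fun A => A.Nonempty ∧ A.gcd id = 1) with hP
  let fam : Finset ℕ → Finset ℕ → Finset (Finset ℕ) := fun T U =>
    X.powerset.filter (fun S => T ⊆ S ∧ Disjoint U S)
  have hsubP : ∀ T U : Finset ℕ, T.Nonempty →
      (∃ a ∈ T, ∃ b ∈ T, Nat.gcd a b = 1) → fam T U ⊆ P := by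
    intro T U hTne ⟨a, ha, b, hb, hab⟩ S hS
    simp only [fam, mem_filter, mem_powerset] at hS
    simp only [hP, mem_filter, mem_powerset]
    exact ⟨hS.1, hTne.mono hS.2.1, gcd_one_of_pair (hS.2.1 ha) (hS.2.1 hb) hab⟩
  -- the four families
  have hcard : ∀ T U : Finset ℕ, T ⊆ X → Disjoint T U →
      (fam T U).card = 2 ^ ((X \ (T ∪ U)).card) := fun T U h1 h2 => card_aux X T U h1 h2
  have hXcard : X.card = n := by simp [hX]
  have hcardsd : ∀ V : Finset ℕ, V ⊆ X → (X \ V).card = n - V.card := by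
    intro V hV; rw [Finset.card_sdiff_of_subset hV, hXcard]
  have hdisj : ∀ (T U T' U' : Finset ℕ) (a : ℕ), a ∈ T → a ∈ U' →
      Disjoint (fam T U) (fam T' U') := by
    intro T U T' U' a haT haU'
    rw [Finset.disjoint_left]
    intro S hS hS'
    simp only [fam, mem_filter] at hS hS'
    exact (Finset.disjoint_left.mp hS'.2.2) haU' (hS.2.1 haT)
  set A := fam {1} ∅ with hA
  set B := fam {2,3} {1} with hB
  set C := fam {4,5} {1,2} with hC
  set D := fam {2,5} {1,3} with hD
  have hsub : A ∪ (B ∪ (C ∪ D)) ⊆ P := by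
    apply Finset.union_subset
    · exact hsubP _ _ ⟨1, by simp⟩ ⟨1, by simp, 1, by simp, by norm_num⟩
    apply Finset.union_subset
    · exact hsubP _ _ ⟨2, by simp⟩ ⟨2, by simp, 3, by simp, by norm_num⟩
    apply Finset.union_subset
    · exact hsubP _ _ ⟨4, by simp⟩ ⟨4, by simp, 5, by simp, by norm_num⟩
    · exact hsubP _ _ ⟨2, by simp⟩ ⟨2, by simp, 5, by simp, by norm_num⟩
  have dAB : Disjoint A B := hdisj _ _ _ _ 1 (by simp) (by simp)
  have dAC : Disjoint A C := hdisj _ _ _ _ 1 (by simp) (by simp)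
  have dAD : Disjoint A D := hdisj _ _ _ _ 1 (by simp) (by simp)
  have dBC : Disjoint B C := hdisj _ _ _ _ 2 (by simp) (by simp)
  have dBD : Disjoint B D := hdisj _ _ _ _ 3 (by simp) (by simp)
  have dCD : Disjoint C D := (hdisj _ _ _ _ 2 (by simp) (by simp)).symm
  have hcardU : (A ∪ (B ∪ (C ∪ D))).card = A.card + (B.card + (C.card + D.card)) := by
    rw [Finset.card_union_of_disjoint (by
        rw [Finset.disjoint_union_right, Finset.disjoint_union_right]
        exact ⟨dAB, dAC, dAD⟩),
      Finset.card_union_of_disjoint (by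
        rw [Finset.disjoint_union_right]
        exact ⟨dBC, dBD⟩),
      Finset.card_union_of_disjoint dCD]
  have h1n : (1:ℕ) ≤ n := by omega
  have hAc : A.card = 2 ^ (n - 1) := by
    rw [hA, hcard _ _ (by intro x hx; simp at hx; subst hx; exact hmem 1 le_rfl h1n) (by simp),
      hcardsd _ (by intro x hx; simp at hx; subst hx; exact hmem 1 le_rfl h1n)]
    have hc : ({1} ∪ ∅ : Finset ℕ).card = 1 := by decide
    rw [hc]
  have hBc : B.card = 2 ^ (n - 3) := by
    have hsX : ({2,3} ∪ {1} : Finset ℕ) ⊆ X := by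
      intro x hx; simp at hx; exact hmem x (by omega) (by omega)
    rw [hB, hcard _ _ (fun x hx => hsX (by simp at hx ⊢; tauto)) (by decide),
      hcardsd _ hsX]
    have hc : ({2,3} ∪ {1} : Finset ℕ).card = 3 := by decide
    rw [hc]
  have hCc : C.card = 2 ^ (n - 4) := by
    have hsX : ({4,5} ∪ {1,2} : Finset ℕ) ⊆ X := by
      intro x hx; simp at hx; exact hmem x (by omega) (by omega)
    rw [hC, hcard _ _ (fun x hx => hsX (by simp at hx ⊢; tauto)) (by decide),
      hcardsd _ hsX]
    have hc : ({4,5} ∪ {1,2} : Finset ℕ).card = 4 := by decide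
    rw [hc]
  have hDc : D.card = 2 ^ (n - 4) := by
    have hsX : ({2,5} ∪ {1,3} : Finset ℕ) ⊆ X := by
      intro x hx; simp at hx; exact hmem x (by omega) (by omega)
    rw [hD, hcard _ _ (fun x hx => hsX (by simp at hx ⊢; tauto)) (by decide),
      hcardsd _ hsX]
    have hc : ({2,5} ∪ {1,3} : Finset ℕ).card = 4 := by decide
    rw [hc]
  have hfinal : f n = P.card := rfl
  have hle : A.card + (B.card + (C.card + D.card)) ≤ f n := by
    rw [← hcardU, hfinal]
    exact Finset.card_le_card hsub
  rw [hAc, hBc, hCc, hDc] at hle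
  refine le_trans ?_ hle
  obtain ⟨m, rfl⟩ := Nat.exists_eq_add_of_le hn
  have e1 : 5 + m - 1 = 4 + m := by omega
  have e2 : 5 + m - 2 = 3 + m := by omega
  have e3 : 5 + m - 3 = 2 + m := by omega
  have e4 : 5 + m - 4 = 1 + m := by omega
  rw [e1, e2, e3, e4]
  simp only [pow_add]
  generalize (2:ℕ) ^ m = k
  norm_num
  omega
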